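/- Let N, L, c_sp be positive integers, let A, A_k, Â_k ∈ ℝ^{N×N}, b, x_k ∈ ℝ^N, and set W_k := A_k − Â_k. Let P be an L-level sparse block collection with sparsity constant c_sp such that (W_k)_{ij} = 0 whenever (i,j) is not contained in t×s for any (t,s) ∈ P, and define the error estimator η_k by η_k² := Σ_{(t,s)∈P} ‖(W_k)_{ts} (x_k)_s‖₂². Assume the saturation condition ‖Â_k x_k − A x_k‖₂ ≤ c_sat ‖A_k x_k − A x_k‖₂ with 0 < c_sat < 1, and assume ‖b − A_k x_k‖₂ ≤ α ‖W_k x_k‖₂ for some α ≥ 0. Then the estimator is reliable: ‖b − A x_k‖₂ ≤ √(c_sp · L) · (1 + α(1 + c_sat))/(1 − c_sat) · η_k. -/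

import Mathlib

open Finset

/-- The Euclidean norm on `ℝ^N`. -/
noncomputable def euclidNorm {N : ℕ} (v : Fin N → ℝ) : ℝ :=
  Real.sqrt (∑ i, v i ^ 2)

/-- `‖M_{ts} x_s‖₂² = Σ_{i∈t} (Σ_{j∈s} M_{ij} x_j)²`. -/
def blockNormSq {N : ℕ} (M : Matrix (Fin N) (Fin N) ℝ)
    (t s : Finset (Fin N)) (x : Fin N → ℝ) : ℝ :=
  ∑ i ∈ t, (∑ j ∈ s, M i j * x j) ^ 2

/-- An `L`-level sparse block collection with sparsity constant `c_sp`: a finite set `P`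
of blocks `(t,s)`, `t,s ⊆ {1,…,N}`, with a level function `lvl : P → {1,…,L}` such that
the product index sets are pairwise disjoint, row (resp. column) clusters of blocks of
the same level are equal or disjoint, and on each level at most `c_sp` blocks share a
given row (resp. column) cluster. -/
structure SparseBlockCollection (N L csp : ℕ) where
  P : Finset (Finset (Fin N) × Finset (Fin N))
  lvl : Finset (Fin N) × Finset (Fin N) → ℕ
  lvl_range : ∀ b ∈ P, 1 ≤ lvl b ∧ lvl b ≤ L
  prod_disjoint : ∀ b ∈ P, ∀ b' ∈ P, b ≠ b' → Disjoint (b.1 ×ˢ b.2) (b'.1 ×ˢ b'.2)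
  rows_eq_or_disjoint : ∀ b ∈ P, ∀ b' ∈ P, lvl b = lvl b' → b.1 = b'.1 ∨ Disjoint b.1 b'.1
  cols_eq_or_disjoint : ∀ b ∈ P, ∀ b' ∈ P, lvl b = lvl b' → b.2 = b'.2 ∨ Disjoint b.2 b'.2
  row_sparsity : ∀ ℓ : ℕ, ∀ t : Finset (Fin N),
    (P.filter (fun b => lvl b = ℓ ∧ b.1 = t)).card ≤ csp
  col_sparsity : ∀ ℓ : ℕ, ∀ s : Finset (Fin N),
    (P.filter (fun b => lvl b = ℓ ∧ b.2 = s)).card ≤ csp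


lemma enorm_eq_norm {N : ℕ} (v : Fin N → ℝ) :
    euclidNorm v = ‖(WithLp.equiv 2 (Fin N → ℝ)).symm v‖ := by
  rw [EuclideanSpace.norm_eq]
  simp [euclidNorm, sq_abs]

lemma enorm_triangle {N : ℕ} (u v : Fin N → ℝ) : euclidNorm (u + v) ≤ euclidNorm u + euclidNorm v := by
  simp only [enorm_eq_norm]
  exact norm_add_le _ _

lemma enorm_nonneg' {N : ℕ} (v : Fin N → ℝ) : 0 ≤ euclidNorm v := Real.sqrt_nonneg _

lemma enorm_sq {N : ℕ} (v : Fin N → ℝ) : euclidNorm v ^ 2 = ∑ i, v i ^ 2 :=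
  Real.sq_sqrt (by positivity)

/-- Lemma 1 (reliability): if `W_k = A_k − Â_k` vanishes outside the blocks of an
`L`-level sparse block collection with sparsity constant `c_sp`, the saturation
condition holds with `0 < c_sat < 1`, and `‖b − A_k x_k‖₂ ≤ α ‖W_k x_k‖₂` with `α ≥ 0`,
then `‖b − A x_k‖₂ ≤ √(c_sp·L) · (1 + α(1 + c_sat))/(1 − c_sat) · η_k`, where
`η_k² = Σ_{(t,s)∈P} ‖(W_k)_{ts}(x_k)_s‖₂²`. -/
theorem estimator_reliability
    (N L csp : ℕ) (hN : 0 < N) (hL : 0 < L) (hcsp : 0 < csp)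
    (A Ak Ahk : Matrix (Fin N) (Fin N) ℝ) (b xk : Fin N → ℝ)
    (Wk : Matrix (Fin N) (Fin N) ℝ) (hW : Wk = Ak - Ahk)
    (C : SparseBlockCollection N L csp)
    (hzero : ∀ i j, (∀ p ∈ C.P, ¬(i ∈ p.1 ∧ j ∈ p.2)) → Wk i j = 0)
    (ηk : ℝ) (hηk0 : 0 ≤ ηk)
    (hηk : ηk ^ 2 = ∑ p ∈ C.P, blockNormSq Wk p.1 p.2 xk)
    (csat α : ℝ) (hc0 : 0 < csat) (hc1 : csat < 1) (hα : 0 ≤ α)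
    (hsat : euclidNorm (Ahk.mulVec xk - A.mulVec xk) ≤ csat * euclidNorm (Ak.mulVec xk - A.mulVec xk))
    (hres : euclidNorm (b - Ak.mulVec xk) ≤ α * euclidNorm (Wk.mulVec xk)) :
    euclidNorm (b - A.mulVec xk) ≤
      Real.sqrt ((csp : ℝ) * (L : ℝ)) * ((1 + α * (1 + csat)) / (1 - csat)) * ηk := by
  classical
  set w := euclidNorm (Wk.mulVec xk) with hwdef
  have hw0 : 0 ≤ w := enorm_nonneg' _
  have hS0 : (0:ℝ) ≤ (csp : ℝ) * (L : ℝ) := by positivity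
  -- row blocks containing i
  set RB : Fin N → Finset (Finset (Fin N) × Finset (Fin N)) :=
    fun i => C.P.filter (fun p => i ∈ p.1) with hRB
  -- cardinality bound
  have hcard : ∀ i, ((RB i).card : ℝ) ≤ (csp : ℝ) * (L : ℝ) := by
    intro i
    have h1 : (RB i).card = ∑ ℓ ∈ Finset.Icc 1 L, ((RB i).filter (fun p => C.lvl p = ℓ)).card := by
      apply Finset.card_eq_sum_card_fiberwise
      intro p hp
      have hpP : p ∈ C.P := (Finset.mem_filter.mp hp).1
      exact Finset.mem_Icc.mpr (C.lvl_range p hpP)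
    have h2 : ∀ ℓ, ((RB i).filter (fun p => C.lvl p = ℓ)).card ≤ csp := by
      intro ℓ
      rcases Finset.eq_empty_or_nonempty ((RB i).filter (fun p => C.lvl p = ℓ)) with he | ⟨p0, hp0⟩
      · simp [he]
      · have hp0P : p0 ∈ C.P := (Finset.mem_filter.mp ((Finset.mem_filter.mp hp0).1)).1
        have hip0 : i ∈ p0.1 := (Finset.mem_filter.mp ((Finset.mem_filter.mp hp0).1)).2
        have hl0 : C.lvl p0 = ℓ := (Finset.mem_filter.mp hp0).2
        refine le_trans (Finset.card_le_card ?_) (C.row_sparsity ℓ p0.1)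
        intro p hp
        have hpP : p ∈ C.P := (Finset.mem_filter.mp ((Finset.mem_filter.mp hp).1)).1
        have hip : i ∈ p.1 := (Finset.mem_filter.mp ((Finset.mem_filter.mp hp).1)).2
        have hl : C.lvl p = ℓ := (Finset.mem_filter.mp hp).2
        refine Finset.mem_filter.mpr ⟨hpP, hl, ?_⟩
        rcases C.rows_eq_or_disjoint p hpP p0 hp0P (hl.trans hl0.symm) with h | h
        · exact h
        · exact absurd (Finset.disjoint_left.mp h hip) (by simp [hip0])
    calc ((RB i).card : ℝ) = ∑ ℓ ∈ Finset.Icc 1 L, (((RB i).filter (fun p => C.lvl p = ℓ)).card : ℝ) := by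
          rw [h1]; push_cast; ring
      _ ≤ ∑ _ℓ ∈ Finset.Icc 1 L, (csp : ℝ) := by
          exact Finset.sum_le_sum (fun ℓ _ => by exact_mod_cast h2 ℓ)
      _ = (L : ℝ) * (csp : ℝ) := by simp [Nat.card_Icc]
      _ = (csp : ℝ) * (L : ℝ) := by ring
  -- decomposition of (Wk x)_i
  have hdecomp : ∀ i, Wk.mulVec xk i = ∑ p ∈ RB i, ∑ j ∈ p.2, Wk i j * xk j := by
    intro i
    have hdisj : ∀ p ∈ RB i, ∀ q ∈ RB i, p ≠ q → Disjoint p.2 q.2 := by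
      intro p hp q hq hpq
      have hpP : p ∈ C.P := (Finset.mem_filter.mp hp).1
      have hqP : q ∈ C.P := (Finset.mem_filter.mp hq).1
      have hip : i ∈ p.1 := (Finset.mem_filter.mp hp).2
      have hiq : i ∈ q.1 := (Finset.mem_filter.mp hq).2
      have hd := C.prod_disjoint p hpP q hqP hpq
      rw [Finset.disjoint_left] at hd ⊢
      intro j hjp hjq
      exact hd (Finset.mk_mem_product hip hjp) (Finset.mk_mem_product hiq hjq)
    rw [← Finset.sum_biUnion hdisj]
    rw [Matrix.mulVec, dotProduct]
    symm
    apply Finset.sum_subset (Finset.subset_univ _)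
    intro j _ hj
    have : Wk i j = 0 := by
      apply hzero
      intro p hpP hmem
      exact hj (Finset.mem_biUnion.mpr ⟨p, Finset.mem_filter.mpr ⟨hpP, hmem.1⟩, hmem.2⟩)
    simp [this]
  -- key estimate: w^2 ≤ csp*L * ηk^2
  have hkey : w ^ 2 ≤ (csp : ℝ) * (L : ℝ) * ηk ^ 2 := by
    rw [hwdef, enorm_sq, hηk]
    calc ∑ i, Wk.mulVec xk i ^ 2
        = ∑ i, (∑ p ∈ RB i, ∑ j ∈ p.2, Wk i j * xk j) ^ 2 := by
          exact Finset.sum_congr rfl (fun i _ => by rw [hdecomp i])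
      _ ≤ ∑ i, ((RB i).card : ℝ) * ∑ p ∈ RB i, (∑ j ∈ p.2, Wk i j * xk j) ^ 2 := by
          exact Finset.sum_le_sum (fun i _ => sq_sum_le_card_mul_sum_sq)
      _ ≤ ∑ i, ((csp : ℝ) * (L : ℝ)) * ∑ p ∈ RB i, (∑ j ∈ p.2, Wk i j * xk j) ^ 2 := by
          refine Finset.sum_le_sum (fun i _ => ?_)
          exact mul_le_mul_of_nonneg_right (hcard i) (by positivity)
      _ = (csp : ℝ) * (L : ℝ) * ∑ i, ∑ p ∈ RB i, (∑ j ∈ p.2, Wk i j * xk j) ^ 2 := by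
          rw [Finset.mul_sum]
      _ = (csp : ℝ) * (L : ℝ) * ∑ p ∈ C.P, blockNormSq Wk p.1 p.2 xk := by
          congr 1
          simp only [hRB, Finset.sum_filter]
          rw [Finset.sum_comm]
          refine Finset.sum_congr rfl (fun p _ => ?_)
          rw [Finset.sum_ite_mem, Finset.univ_inter]
          simp [blockNormSq]
  have hwB : w ≤ Real.sqrt ((csp:ℝ)*(L:ℝ)) * ηk := by
    have h2 : w^2 ≤ (Real.sqrt ((csp:ℝ)*(L:ℝ)) * ηk)^2 := by
      rw [mul_pow, Real.sq_sqrt hS0]; exact hkey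
    exact (pow_le_pow_iff_left₀ hw0 (by positivity) two_ne_zero).mp h2
  have h1c : (0:ℝ) < 1 - csat := by linarith
  set E := euclidNorm (Ak.mulVec xk - A.mulVec xk) with hEdef
  have hE0 : 0 ≤ E := enorm_nonneg' _
  have hEw : E * (1 - csat) ≤ w := by
    have hsplit : Ak.mulVec xk - A.mulVec xk =
        (Wk.mulVec xk) + (Ahk.mulVec xk - A.mulVec xk) := by
      rw [hW, Matrix.sub_mulVec]; abel
    have htr := enorm_triangle (Wk.mulVec xk) (Ahk.mulVec xk - A.mulVec xk)
    rw [← hsplit] at htr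
    have h3 : E ≤ w + csat * E := le_trans htr (by linarith [hsat])
    nlinarith
  have hB : euclidNorm (b - A.mulVec xk) ≤ α * w + E := by
    have hsplit : b - A.mulVec xk = (b - Ak.mulVec xk) + (Ak.mulVec xk - A.mulVec xk) := by abel
    rw [hsplit]
    exact le_trans (enorm_triangle _ _) (by linarith [hres])
  have hBw : euclidNorm (b - A.mulVec xk) ≤ (1 + α * (1 + csat)) / (1 - csat) * w := by
    rw [div_mul_eq_mul_div, le_div_iff₀ h1c]
    nlinarith [mul_le_mul_of_nonneg_right hB h1c.le, hEw,
      mul_nonneg (mul_nonneg hα hw0) hc0.le]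
  calc euclidNorm (b - A.mulVec xk) ≤ (1 + α * (1 + csat)) / (1 - csat) * w := hBw
    _ ≤ (1 + α * (1 + csat)) / (1 - csat) * (Real.sqrt ((csp:ℝ)*(L:ℝ)) * ηk) := by
        apply mul_le_mul_of_nonneg_left hwB
        positivity
    _ = Real.sqrt ((csp : ℝ) * (L : ℝ)) * ((1 + α * (1 + csat)) / (1 - csat)) * ηk := by ring
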